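/- Let ν : H² → ℂ be a bounded linear functional such that ν(f) ≠ 0 for every outer function f ∈ H². Then there exist z₀ ∈ 𝔻 and σ ∈ ℂ \ {0} such that ν(f) = σ·f(z₀) for all f ∈ H². -/

import Mathlib

open Metric

/-- The set of right-shifted copies of a sequence `a ∈ ℓ²(ℤ₊)`. -/
def shiftOrbit (a : lp (fun _ : ℕ => ℂ) 2) : Set (lp (fun _ : ℕ => ℂ) 2) :=
  {f | ∃ m : ℕ, ∀ n : ℕ, f n = if n < m then 0 else a (n - m)}

/-- Outer functions in H², identified with their ℓ² coefficient sequences: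
the span of the right shifts of the coefficient sequence is dense. -/
def OuterSeq (a : lp (fun _ : ℕ => ℂ) 2) : Prop :=
  Dense ((Submodule.span ℂ (shiftOrbit a) : Submodule ℂ (lp (fun _ : ℕ => ℂ) 2)) :
    Set (lp (fun _ : ℕ => ℂ) 2))

namespace Stmt11

noncomputable section

abbrev H2 : Type := lp (fun _ : ℕ => ℂ) 2

lemma memℓp2 {f : ℕ → ℂ} (hf : Summable fun n => ‖f n‖) : Memℓp f 2 := by
  refine Memℓp.of_exponent_ge (memℓp_gen ?_) one_le_two
  simpa using hf

def lpOf {f : ℕ → ℂ} (hf : Summable fun n => ‖f n‖) : H2 := ⟨f, memℓp2 hf⟩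

@[simp] lemma lpOf_apply {f : ℕ → ℂ} (hf : Summable fun n => ‖f n‖) (n : ℕ) :
    (lpOf hf) n = f n := rfl

lemma summable_shift {f : ℕ → ℂ} (hf : Summable fun n => ‖f n‖) (m : ℕ) :
    Summable fun n => ‖(if n < m then (0:ℂ) else f (n - m))‖ := by
  apply (summable_nat_add_iff m).mp
  have : (fun n => ‖(if n + m < m then (0:ℂ) else f (n + m - m))‖) = fun n => ‖f n‖ := by
    funext n
    rw [if_neg (by omega), Nat.add_sub_cancel]
  rw [this]
  exact hf
/-- Key cancellation: if `d ⋆ a = δ₀` with both absolutely summable, `b` bounded,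
and all "shifted pairings" of `a` against `b` vanish, then `b = 0`. -/
lemma seq_cancel (a d b : ℕ → ℂ) (C : ℝ)
    (hA : Summable fun n => ‖a n‖) (hD : Summable fun n => ‖d n‖)
    (hb : ∀ k, ‖b k‖ ≤ C)
    (hconv : ∀ l : ℕ, ∑ j ∈ Finset.range (l + 1), d j * a (l - j)
      = if l = 0 then 1 else 0)
    (hT : ∀ m : ℕ, ∑' j : ℕ, (starRingEnd ℂ) (a j) * b (j + m) = 0)
    (m : ℕ) : b m = 0 := by
  classical
  have hC : 0 ≤ C := le_trans (norm_nonneg _) (hb 0)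
  -- the doubly-indexed family
  have key : ∀ (F : ℕ × ℕ → ℂ),
      (∀ p : ℕ × ℕ, ‖F p‖ ≤ ‖d p.1‖ * (‖a p.2‖ * C)) → Summable F := by
    intro F hFb
    apply Summable.of_norm_bounded (g := fun p : ℕ × ℕ => ‖d p.1‖ * (‖a p.2‖ * C)) ?_ hFb
    exact hD.mul_of_nonneg (hA.mul_right C)
      (fun n => norm_nonneg _) (fun n => mul_nonneg (norm_nonneg _) hC)
  have Fb : ∀ (j n k : ℕ), ‖(starRingEnd ℂ) (d j) * ((starRingEnd ℂ) (a n) * b k)‖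
      ≤ ‖d j‖ * (‖a n‖ * C) := by
    intro j n k
    rw [norm_mul, norm_mul, RCLike.norm_conj, RCLike.norm_conj]
    exact mul_le_mul_of_nonneg_left
      (mul_le_mul_of_nonneg_left (hb k) (norm_nonneg _)) (norm_nonneg _)
  have hFs : Summable (fun p : ℕ × ℕ =>
      (starRingEnd ℂ) (d p.1) * ((starRingEnd ℂ) (a p.2) * b (p.2 + (p.1 + m)))) :=
    key _ (fun p => Fb _ _ _)
  have hfib : ∀ j : ℕ, Summable (fun n : ℕ =>
      (starRingEnd ℂ) (d j) * ((starRingEnd ℂ) (a n) * b (n + (j + m)))) := by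
    intro j
    apply Summable.of_norm_bounded (g := fun n : ℕ => ‖d j‖ * (‖a n‖ * C))
    · exact (hA.mul_right C).mul_left _
    · intro n; exact Fb _ _ _
  -- first evaluation: it vanishes
  have h1 : ∑' p : ℕ × ℕ,
      (starRingEnd ℂ) (d p.1) * ((starRingEnd ℂ) (a p.2) * b (p.2 + (p.1 + m))) = 0 := by
    rw [Summable.tsum_prod' hFs hfib]
    have : ∀ j : ℕ, ∑' n : ℕ,
        (starRingEnd ℂ) (d j) * ((starRingEnd ℂ) (a n) * b (n + (j + m))) = 0 := by
      intro j
      rw [tsum_mul_left, hT (j + m), mul_zero]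
    simp only [this, tsum_zero]
  -- second evaluation: regroup along diagonals
  have h2 : ∑' p : ℕ × ℕ,
      (starRingEnd ℂ) (d p.1) * ((starRingEnd ℂ) (a p.2) * b (p.2 + (p.1 + m))) = b m := by
    have hinj : Function.Injective (fun p : ℕ × ℕ => (p.2 + p.1, p.1)) := by
      intro p q hpq
      simp only [Prod.mk.injEq] at hpq
      obtain ⟨h1', h2'⟩ := hpq
      exact Prod.ext (by omega) (by omega)
    have key2 := Function.Injective.tsum_eq (g := fun p : ℕ × ℕ => (p.2 + p.1, p.1)) hinj
      (f := fun q : ℕ × ℕ =>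
        if q.2 ≤ q.1 then
          (starRingEnd ℂ) (d q.2) * ((starRingEnd ℂ) (a (q.1 - q.2)) * b (q.1 + m))
        else 0) ?_
    · have hcomp : ∀ p : ℕ × ℕ,
          (if p.1 ≤ p.2 + p.1 then
            (starRingEnd ℂ) (d p.1) * ((starRingEnd ℂ) (a (p.2 + p.1 - p.1)) * b (p.2 + p.1 + m))
          else 0)
          = (starRingEnd ℂ) (d p.1) * ((starRingEnd ℂ) (a p.2) * b (p.2 + (p.1 + m))) := by
        intro p
        rw [if_pos (Nat.le_add_left _ _), Nat.add_sub_cancel, Nat.add_assoc]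
      rw [← tsum_congr hcomp, key2]
      -- now compute the diagonal sum
      have hfin : ∀ l : ℕ, ∑' j : ℕ,
          (if j ≤ l then
            (starRingEnd ℂ) (d j) * ((starRingEnd ℂ) (a (l - j)) * b (l + m))
          else 0)
          = (if l = 0 then 1 else 0) * b (l + m) := by
        intro l
        rw [tsum_eq_sum (s := Finset.range (l + 1))
          (by intro j hj; rw [if_neg (by simpa using hj)])]
        have : ∀ j ∈ Finset.range (l + 1),
            (if j ≤ l then
              (starRingEnd ℂ) (d j) * ((starRingEnd ℂ) (a (l - j)) * b (l + m))
            else 0)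
            = (starRingEnd ℂ) (d j * a (l - j)) * b (l + m) := by
          intro j hj
          rw [if_pos (by simpa [Nat.lt_succ_iff] using hj), map_mul, mul_assoc]
        rw [Finset.sum_congr rfl this, ← Finset.sum_mul, ← map_sum, hconv l]
        by_cases hl : l = 0 <;> simp [hl]
      -- sum over q : ℕ × ℕ of the diagonal form
      have hsum : Summable (fun q : ℕ × ℕ =>
          if q.2 ≤ q.1 then
            (starRingEnd ℂ) (d q.2) * ((starRingEnd ℂ) (a (q.1 - q.2)) * b (q.1 + m))
          else 0) := by
        refine (hinj.summable_iff ?_).mp (by rw [show ((fun q : ℕ × ℕ =>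
          if q.2 ≤ q.1 then
            (starRingEnd ℂ) (d q.2) * ((starRingEnd ℂ) (a (q.1 - q.2)) * b (q.1 + m))
          else 0) ∘ fun p : ℕ × ℕ => (p.2 + p.1, p.1)) = _ from funext hcomp]; exact hFs)
        intro q hq
        refine if_neg (fun hle => hq ⟨(q.2, q.1 - q.2), ?_⟩)
        have : q.1 - q.2 + q.2 = q.1 := by omega
        simp only [this]
      have hfib2 : ∀ l : ℕ, Summable (fun j : ℕ =>
          if j ≤ l then
            (starRingEnd ℂ) (d j) * ((starRingEnd ℂ) (a (l - j)) * b (l + m))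
          else 0) := by
        intro l
        apply summable_of_ne_finset_zero (s := Finset.range (l + 1))
        intro j hj
        rw [if_neg (by simpa using hj)]
      rw [Summable.tsum_prod' hsum hfib2]
      simp only [hfin]
      rw [tsum_eq_single 0 (by intro l hl; rw [if_neg hl, zero_mul])]
      simp
    · -- support condition
      intro q hq
      rw [Function.mem_support] at hq
      by_cases hle : q.2 ≤ q.1
      · exact ⟨(q.2, q.1 - q.2), by
          have h' : q.1 - q.2 + q.2 = q.1 := by omega
          simp only [h']⟩
      · exact (hq (if_neg hle)).elim
  rw [h1] at h2
  exact h2.symm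

open PowerSeries in
/-- If the coefficient sequence of `A` is absolutely summable and `A` has a multiplicative
inverse whose coefficients are also absolutely summable, then the sequence is outer. -/
lemma outerSeq_of_inv (A D : PowerSeries ℂ) (hAD : A * D = 1)
    (hA : Summable fun n => ‖coeff n A‖) (hD : Summable fun n => ‖coeff n D‖) :
    OuterSeq (lpOf hA) := by
  rw [OuterSeq, Submodule.dense_iff_topologicalClosure_eq_top,
    Submodule.topologicalClosure_eq_top_iff, Submodule.eq_bot_iff]
  intro b hb
  have horbit : ∀ m : ℕ, lpOf (summable_shift hA m) ∈ shiftOrbit (lpOf hA) :=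
    fun m => ⟨m, fun n => rfl⟩
  have hT : ∀ m : ℕ, ∑' j : ℕ, (starRingEnd ℂ) (coeff j A) * b (j + m) = 0 := by
    intro m
    have h0 : (inner ℂ (lpOf (summable_shift hA m)) b : ℂ) = 0 :=
      (Submodule.mem_orthogonal _ b).mp hb _ (Submodule.subset_span (horbit m))
    rw [lp.inner_eq_tsum] at h0
    rw [← h0]
    refine Eq.trans ?_ (Function.Injective.tsum_eq (g := fun j => j + m) (add_left_injective m)
      (f := fun n => (inner ℂ ((lpOf (summable_shift hA m)) n) (b n) : ℂ)) ?_)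
    · refine tsum_congr fun j => ?_
      rw [RCLike.inner_apply, lpOf_apply, if_neg (by omega), Nat.add_sub_cancel, mul_comm]
    · intro n hn
      rw [Function.mem_support] at hn
      rcases lt_or_ge n m with hnm | hnm
      · refine (hn ?_).elim
        simp only [lpOf_apply, if_pos hnm, RCLike.inner_apply, map_zero, zero_mul, mul_zero]
      · exact ⟨n - m, Nat.sub_add_cancel hnm⟩
  have hconv : ∀ l : ℕ, ∑ j ∈ Finset.range (l + 1),
      coeff j D * coeff (l - j) A = if l = 0 then 1 else 0 := by
    intro l
    have : coeff l (D * A) = if l = 0 then 1 else 0 := by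
      rw [mul_comm D A, hAD, PowerSeries.coeff_one]
    rw [← this, PowerSeries.coeff_mul, Finset.Nat.sum_antidiagonal_eq_sum_range_succ_mk]
  have hz : ∀ m : ℕ, b m = 0 := by
    intro m
    exact seq_cancel (fun n => coeff n A) (fun n => coeff n D) (fun n => b n) ‖b‖
      hA hD (fun k => lp.norm_apply_le_norm (by norm_num) b k) hconv hT m
  apply lp.ext
  funext n
  exact hz n

open PowerSeries

/-- The power series of `e^{wz}`. -/
def EW (w : ℂ) : PowerSeries ℂ := PowerSeries.mk fun n => w ^ n / n.factorial

lemma coeff_EW (w : ℂ) (n : ℕ) : coeff n (EW w) = w ^ n / n.factorial := coeff_mk _ _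

lemma EW_eq_rescale (w : ℂ) : EW w = rescale w (PowerSeries.exp ℂ) := by
  ext n
  rw [coeff_EW, coeff_rescale, coeff_exp]
  have : (algebraMap ℚ ℂ) (1 / (n.factorial : ℚ)) = 1 / (n.factorial : ℂ) := by
    push_cast
    simp
  rw [this]
  ring

lemma EW_mul_EW_neg (w : ℂ) : EW w * EW (-w) = 1 := by
  rw [EW_eq_rescale, EW_eq_rescale, exp_mul_exp_eq_exp_add, add_neg_cancel, rescale_zero]
  simp

lemma summable_EW (w : ℂ) : Summable fun n => ‖coeff n (EW w)‖ := by
  refine Summable.of_nonneg_of_le (fun n => norm_nonneg _) (fun n => ?_)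
    (Real.summable_pow_div_factorial ‖w‖)
  rw [coeff_EW, norm_div, norm_pow]
  simp

/-- geometric series with ratio `-t` : the inverse of `1 + tX`. -/
def GM (t : ℂ) : PowerSeries ℂ := PowerSeries.mk fun n => (-t) ^ n

lemma OP_mul_GM (t : ℂ) : (1 + PowerSeries.C t * X) * GM t = 1 := by
  ext l
  rw [PowerSeries.coeff_one, add_mul, one_mul, map_add]
  rcases Nat.eq_zero_or_pos l with hl | hl
  · subst hl
    simp [GM, map_mul]
  · obtain ⟨k, rfl⟩ := Nat.exists_eq_add_of_le hl
    rw [if_neg (by omega)]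
    have h1 : coeff (1 + k) (GM t) = (-t) ^ (1 + k) := coeff_mk _ _
    have h2 : (PowerSeries.C t * X) = X * PowerSeries.C t := by ring
    rw [h1, h2, mul_assoc]
    have h3 : (1 + k) = k + 1 := by omega
    rw [h3, coeff_succ_X_mul]
    have h4 : coeff k (PowerSeries.C t * GM t) = t * (-t) ^ k := by
      rw [PowerSeries.coeff_C_mul, GM, coeff_mk]
    rw [h4]
    ring

lemma summable_GM {t : ℂ} (ht : ‖t‖ < 1) : Summable fun n => ‖coeff n (GM t)‖ := by
  have : ∀ n, ‖coeff n (GM t)‖ = ‖t‖ ^ n := by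
    intro n
    rw [show coeff n (GM t) = (-t) ^ n from coeff_mk _ _, norm_pow, norm_neg]
  simp only [this]
  exact summable_geometric_of_lt_one (norm_nonneg t) ht

lemma summable_coeff_mul {A B : PowerSeries ℂ}
    (hA : Summable fun n => ‖coeff n A‖) (hB : Summable fun n => ‖coeff n B‖) :
    Summable fun n => ‖coeff n (A * B)‖ := by
  refine Summable.of_nonneg_of_le (fun n => norm_nonneg _) (fun n => ?_)
    (summable_norm_sum_mul_antidiagonal_of_summable_norm hA hB)
  rw [PowerSeries.coeff_mul]

lemma summable_expTsum {c : ℕ → ℂ} {B : ℝ} (hc : ∀ n, ‖c n‖ ≤ B) (w : ℂ) :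
    Summable fun n : ℕ => c n * w ^ n / n.factorial := by
  apply Summable.of_norm
  refine Summable.of_nonneg_of_le (fun n => norm_nonneg _) (fun n => ?_)
    ((Real.summable_pow_div_factorial ‖w‖).mul_left B)
  rw [norm_div, norm_mul, norm_pow]
  simp only [Complex.norm_natCast]
  rw [mul_div_assoc]
  exact mul_le_mul_of_nonneg_right (hc n)
    (div_nonneg (pow_nonneg (norm_nonneg _) _) (Nat.cast_nonneg _))

/-- Quadratic Taylor remainder estimate for powers. -/
lemma pow_taylor_est (w w₀ : ℂ) (R : ℝ) (hR : 1 ≤ R) (hw : ‖w‖ ≤ R) (hw₀ : ‖w₀‖ ≤ R) (n : ℕ) :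
    ‖w ^ (n+1) - w₀ ^ (n+1) - ((n:ℂ)+1) * (w - w₀) * w₀ ^ n‖
      ≤ (n+1)^2 * R ^ (3*n) * ‖w - w₀‖^2 := by
  have hR0 : (0:ℝ) ≤ R := le_trans zero_le_one hR
  have hpow : ∀ k : ℕ, k ≤ n → ∀ x : ℂ, ‖x‖ ≤ R → ‖x ^ k‖ ≤ R ^ n := by
    intro k hk x hx
    rw [norm_pow]
    calc ‖x‖ ^ k ≤ R ^ k := pow_le_pow_left₀ (norm_nonneg _) hx k
    _ ≤ R ^ n := pow_le_pow_right₀ hR hk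
  have h1 : w ^ (n+1) - w₀ ^ (n+1)
      = (∑ i ∈ Finset.range (n+1), w ^ i * w₀ ^ (n - i)) * (w - w₀) := by
    rw [← geom_sum₂_mul w w₀ (n+1)]
    simp
  have h2 : ∀ i : ℕ, w ^ i - w₀ ^ i
      = (∑ j ∈ Finset.range i, w ^ j * w₀ ^ (i - 1 - j)) * (w - w₀) :=
    fun i => (geom_sum₂_mul w w₀ i).symm
  have h3 : ∑ i ∈ Finset.range (n+1), w₀ ^ i * w₀ ^ (n - i) = ((n:ℂ)+1) * w₀ ^ n := by
    rw [Finset.sum_congr rfl (fun i hi => by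
      rw [← pow_add, Nat.add_sub_cancel' (Nat.lt_succ_iff.mp (Finset.mem_range.mp hi))])]
    rw [Finset.sum_const, Finset.card_range, nsmul_eq_mul]
    push_cast
    ring
  have key : w ^ (n+1) - w₀ ^ (n+1) - ((n:ℂ)+1) * (w - w₀) * w₀ ^ n
      = (w - w₀)^2 * ∑ i ∈ Finset.range (n+1), w₀ ^ (n - i) *
          ∑ j ∈ Finset.range i, w ^ j * w₀ ^ (i - 1 - j) := by
    calc w ^ (n+1) - w₀ ^ (n+1) - ((n:ℂ)+1) * (w - w₀) * w₀ ^ n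
        = (∑ i ∈ Finset.range (n+1), w ^ i * w₀ ^ (n - i)
            - ∑ i ∈ Finset.range (n+1), w₀ ^ i * w₀ ^ (n - i)) * (w - w₀) := by
          rw [sub_mul, ← h1, h3]; ring
      _ = (∑ i ∈ Finset.range (n+1), (w ^ i - w₀ ^ i) * w₀ ^ (n - i)) * (w - w₀) := by
          rw [← Finset.sum_sub_distrib]
          congr 1
          exact Finset.sum_congr rfl fun i _ => by ring
      _ = (w - w₀)^2 * ∑ i ∈ Finset.range (n+1), w₀ ^ (n - i) *
            ∑ j ∈ Finset.range i, w ^ j * w₀ ^ (i - 1 - j) := by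
          rw [Finset.sum_mul, Finset.mul_sum]
          refine Finset.sum_congr rfl fun i _ => ?_
          rw [h2 i]
          ring
  rw [key, norm_mul, norm_pow, mul_comm ((n+1:ℝ)^2 * R ^ (3*n)) _]
  refine mul_le_mul_of_nonneg_left ?_ (by positivity)
  have hterm : ∀ i ∈ Finset.range (n+1),
      ‖w₀ ^ (n - i) * ∑ j ∈ Finset.range i, w ^ j * w₀ ^ (i - 1 - j)‖
        ≤ R^n * ((n+1) * (R^n * R^n)) := by
    intro i hi
    have hi' : i ≤ n := by have := Finset.mem_range.mp hi; omega
    rw [norm_mul]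
    refine mul_le_mul (hpow _ (Nat.sub_le _ _) _ hw₀) ?_ (norm_nonneg _) (by positivity)
    calc ‖∑ j ∈ Finset.range i, w ^ j * w₀ ^ (i - 1 - j)‖
        ≤ ∑ j ∈ Finset.range i, ‖w ^ j * w₀ ^ (i - 1 - j)‖ := norm_sum_le _ _
      _ ≤ ∑ _j ∈ Finset.range i, R^n * R^n := by
          refine Finset.sum_le_sum fun j hj => ?_
          have hj' : j < i := Finset.mem_range.mp hj
          rw [norm_mul]
          exact mul_le_mul (hpow _ (by omega) _ hw) (hpow _ (by omega) _ hw₀)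
            (norm_nonneg _) (by positivity)
      _ ≤ (n+1 : ℝ) * (R^n * R^n) := by
          rw [Finset.sum_const, Finset.card_range, nsmul_eq_mul]
          refine mul_le_mul_of_nonneg_right ?_ (by positivity)
          exact_mod_cast Nat.cast_le.mpr (by omega : i ≤ n + 1)
  calc ‖∑ i ∈ Finset.range (n+1), w₀ ^ (n - i) *
        ∑ j ∈ Finset.range i, w ^ j * w₀ ^ (i - 1 - j)‖
      ≤ ∑ i ∈ Finset.range (n+1), ‖w₀ ^ (n - i) *
          ∑ j ∈ Finset.range i, w ^ j * w₀ ^ (i - 1 - j)‖ := norm_sum_le _ _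
    _ ≤ ∑ _i ∈ Finset.range (n+1), R^n * ((n+1) * (R^n * R^n)) :=
        Finset.sum_le_sum hterm
    _ = (n+1:ℝ)^2 * R^(3*n) := by
        rw [Finset.sum_const, Finset.card_range, nsmul_eq_mul]
        have hp : R^n * (R^n * R^n) = R^(3*n) := by
          rw [← pow_add, ← pow_add]
          congr 1
          ring
        push_cast
        nlinarith [hp, pow_nonneg hR0 n, pow_nonneg hR0 (3*n)]

set_option maxHeartbeats 1000000 in
lemma hasDerivAt_expTsum {c : ℕ → ℂ} {B : ℝ} (hc : ∀ n, ‖c n‖ ≤ B) (w₀ : ℂ) :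
    HasDerivAt (fun w => ∑' n : ℕ, c n * w ^ n / n.factorial)
      (∑' n : ℕ, c (n+1) * w₀ ^ n / n.factorial) w₀ := by
  have hB : 0 ≤ B := le_trans (norm_nonneg _) (hc 0)
  set R : ℝ := ‖w₀‖ + 2 with hR_def
  have hR1 : 1 ≤ R := by
    have := norm_nonneg w₀
    rw [hR_def]; linarith
  have hR0 : 0 ≤ R := le_trans zero_le_one hR1
  have hc' : ∀ n, ‖c (n+1)‖ ≤ B := fun n => hc (n+1)
  -- the summable majorant
  set u : ℕ → ℝ := fun n => B * ((n+1)^2 * R^(3*n) / (n+1).factorial) with hu_def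
  have hu_sum : Summable u := by
    refine Summable.of_nonneg_of_le (fun n => by positivity) (fun n => ?_)
      (((Real.summable_pow_div_factorial (2 * R^3))).mul_left B)
    rw [hu_def]
    refine mul_le_mul_of_nonneg_left ?_ hB
    have h1 : ((n+1).factorial : ℝ) = (n+1) * n.factorial := by
      rw [Nat.factorial_succ]; push_cast; ring
    have hfac : (0:ℝ) < n.factorial := by exact_mod_cast n.factorial_pos
    rw [h1]
    rw [div_le_div_iff₀ (by positivity) (by positivity)]
    have h2 : (n+1:ℝ)^2 * R^(3*n) * n.factorial = ((n+1) * R^(3*n)) * ((n+1) * n.factorial) := by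
      ring
    rw [h2]
    refine mul_le_mul_of_nonneg_right ?_ (by positivity)
    have h3 : (n+1:ℝ) ≤ 2^n := by exact_mod_cast Nat.lt_two_pow_self
    calc (n+1:ℝ) * R^(3*n) ≤ 2^n * R^(3*n) :=
          mul_le_mul_of_nonneg_right h3 (by positivity)
      _ = (2*R^3)^n := by rw [mul_pow, pow_mul]
  set K : ℝ := ∑' n, u n with hK_def
  have hK0 : 0 ≤ K := tsum_nonneg (fun n => by positivity)
  -- main quadratic estimate
  set L : ℂ := ∑' n : ℕ, c (n+1) * w₀ ^ n / n.factorial with hL_def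
  have main : ∀ w : ℂ, ‖w - w₀‖ ≤ 1 →
      ‖(∑' n : ℕ, c n * w ^ n / n.factorial) - (∑' n : ℕ, c n * w₀ ^ n / n.factorial)
        - (w - w₀) * L‖ ≤ K * ‖w - w₀‖^2 := by
    intro w hw1
    have hwR : ‖w‖ ≤ R := by
      have := norm_sub_norm_le w w₀
      rw [hR_def]; linarith
    have hw₀R : ‖w₀‖ ≤ R := by rw [hR_def]; linarith
    have hsw := summable_expTsum hc w
    have hsw₀ := summable_expTsum hc w₀
    have hsL := summable_expTsum hc' w₀
    -- rewrite the difference of sums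
    have e1 : (∑' n : ℕ, c n * w ^ n / n.factorial) - (∑' n : ℕ, c n * w₀ ^ n / n.factorial)
        = ∑' n : ℕ, (c (n+1) * w ^ (n+1) / (n+1).factorial
            - c (n+1) * w₀ ^ (n+1) / (n+1).factorial) := by
      rw [← Summable.tsum_sub hsw hsw₀, Summable.tsum_eq_zero_add (hsw.sub hsw₀)]
      simp
    have e2 : (w - w₀) * L = ∑' n : ℕ, (w - w₀) * (c (n+1) * w₀ ^ n / n.factorial) := by
      rw [tsum_mul_left]
    have hs1 : Summable fun n : ℕ => c (n+1) * w ^ (n+1) / (n+1).factorial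
        - c (n+1) * w₀ ^ (n+1) / (n+1).factorial := by
      apply Summable.sub
      · exact ((summable_nat_add_iff
          (f := fun n : ℕ => c n * w ^ n / n.factorial) 1).mpr (summable_expTsum hc w))
      · exact ((summable_nat_add_iff
          (f := fun n : ℕ => c n * w₀ ^ n / n.factorial) 1).mpr (summable_expTsum hc w₀))
    have hs2 : Summable fun n : ℕ => (w - w₀) * (c (n+1) * w₀ ^ n / n.factorial) :=
      hsL.mul_left _
    rw [e1, e2, ← Summable.tsum_sub hs1 hs2]
    -- termwise bound
    have hterm : ∀ n : ℕ,
        ‖(c (n+1) * w ^ (n+1) / (n+1).factorial - c (n+1) * w₀ ^ (n+1) / (n+1).factorial)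
          - (w - w₀) * (c (n+1) * w₀ ^ n / n.factorial)‖ ≤ u n * ‖w - w₀‖^2 := by
      intro n
      have hfacn : ((n.factorial : ℂ)) ≠ 0 := by
        exact_mod_cast Nat.cast_ne_zero.mpr n.factorial_ne_zero
      have hfacn1 : (((n+1).factorial : ℂ)) ≠ 0 := by
        exact_mod_cast Nat.cast_ne_zero.mpr (n+1).factorial_ne_zero
      have hfs : ((n+1).factorial : ℂ) = ((n:ℂ)+1) * n.factorial := by
        rw [Nat.factorial_succ]; push_cast; ring
      have eq1 : (c (n+1) * w ^ (n+1) / (n+1).factorial - c (n+1) * w₀ ^ (n+1) / (n+1).factorial)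
          - (w - w₀) * (c (n+1) * w₀ ^ n / n.factorial)
          = c (n+1) * (w ^ (n+1) - w₀ ^ (n+1) - ((n:ℂ)+1) * (w - w₀) * w₀ ^ n)
              / (n+1).factorial := by
        have hne1 : ((n:ℂ)+1) ≠ 0 := Nat.cast_add_one_ne_zero n
        rw [hfs]
        field_simp
      rw [eq1, norm_div, norm_mul]
      have hest := pow_taylor_est w w₀ R hR1 hwR hw₀R n
      have hfn : ‖((n+1).factorial : ℂ)‖ = ((n+1).factorial : ℝ) := by
        simp
      rw [hfn, hu_def]
      rw [div_le_iff₀ (by exact_mod_cast (n+1).factorial_pos : (0:ℝ) < ((n+1).factorial : ℝ))]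
      calc ‖c (n+1)‖ * ‖w ^ (n+1) - w₀ ^ (n+1) - ((n:ℂ)+1) * (w - w₀) * w₀ ^ n‖
          ≤ B * ((n+1)^2 * R^(3*n) * ‖w - w₀‖^2) :=
            mul_le_mul (hc (n+1)) hest (norm_nonneg _) hB
        _ = B * ((n+1)^2 * R^(3*n) / (n+1).factorial) * ‖w - w₀‖^2 * (n+1).factorial := by
            field_simp
    calc ‖∑' n : ℕ, ((c (n+1) * w ^ (n+1) / (n+1).factorial
            - c (n+1) * w₀ ^ (n+1) / (n+1).factorial)
          - (w - w₀) * (c (n+1) * w₀ ^ n / n.factorial))‖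
        ≤ ∑' n : ℕ, (u n * ‖w - w₀‖^2) := by
          refine (norm_tsum_le_tsum_norm ?_).trans (Summable.tsum_le_tsum hterm ?_ ?_)
          · refine Summable.of_nonneg_of_le (fun n => norm_nonneg _) hterm
              (hu_sum.mul_right _)
          · refine Summable.of_nonneg_of_le (fun n => norm_nonneg _) hterm
              (hu_sum.mul_right _)
          · exact hu_sum.mul_right _
      _ = K * ‖w - w₀‖^2 := by rw [tsum_mul_right]
  -- conclude via little-o
  rw [hasDerivAt_iff_isLittleO, Asymptotics.isLittleO_iff]
  intro ε hε
  rw [Metric.eventually_nhds_iff]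
  refine ⟨min 1 (ε / (K+1)), by positivity, fun w hwd => ?_⟩
  have hd : ‖w - w₀‖ < min 1 (ε / (K+1)) := by
    rw [← dist_eq_norm]; exact hwd
  have h1' : ‖w - w₀‖ ≤ 1 := le_of_lt (lt_of_lt_of_le hd (min_le_left _ _))
  have h2' : ‖w - w₀‖ ≤ ε / (K+1) := le_of_lt (lt_of_lt_of_le hd (min_le_right _ _))
  have := main w h1'
  rw [smul_eq_mul]
  refine le_trans this ?_
  have hnn : 0 ≤ ‖w - w₀‖ := norm_nonneg _
  calc K * ‖w - w₀‖^2 = (K * ‖w - w₀‖) * ‖w - w₀‖ := by ring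
    _ ≤ (K * (ε / (K+1))) * ‖w - w₀‖ := by
        refine mul_le_mul_of_nonneg_right (mul_le_mul_of_nonneg_left h2' hK0) hnn
    _ ≤ ε * ‖w - w₀‖ := by
        refine mul_le_mul_of_nonneg_right ?_ hnn
        have heq : K * (ε / (K+1)) = ε * K / (K+1) := by ring
        rw [heq, div_le_iff₀ (by linarith : (0:ℝ) < K + 1)]
        nlinarith

/-- The family of shifted exponential sums `∑ c_{n+k} w^n / n!`. -/
def fseq (c : ℕ → ℂ) (k : ℕ) (w : ℂ) : ℂ := ∑' n : ℕ, c (n + k) * w ^ n / n.factorial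

lemma fseq_hasDerivAt {c : ℕ → ℂ} {B : ℝ} (hc : ∀ n, ‖c n‖ ≤ B) (k : ℕ) (w₀ : ℂ) :
    HasDerivAt (fseq c k) (fseq c (k+1) w₀) w₀ := by
  have h := hasDerivAt_expTsum (c := fun n => c (n + k)) (B := B) (fun n => hc (n+k)) w₀
  have e : (∑' n : ℕ, c ((n+1) + k) * w₀ ^ n / n.factorial) = fseq c (k+1) w₀ :=
    tsum_congr fun n => by rw [show n + 1 + k = n + (k+1) from by omega]
  rw [e] at h
  exact h

lemma fseq_zero (c : ℕ → ℂ) (k : ℕ) : fseq c k 0 = c k := by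
  rw [fseq, tsum_eq_single 0 (fun n hn => by rw [zero_pow hn, mul_zero, zero_div])]
  simp

end

end Stmt11

open Stmt11 PowerSeries in
/-- A bounded linear functional on H² that is non-vanishing on outer functions is a
non-zero multiple of evaluation at a point of the open unit disk. -/
theorem stmt_11 (ν : lp (fun _ : ℕ => ℂ) 2 →L[ℂ] ℂ)
    (h : ∀ a : lp (fun _ : ℕ => ℂ) 2, OuterSeq a → ν a ≠ 0) :
    ∃ z₀ ∈ ball (0:ℂ) 1, ∃ σ : ℂ, σ ≠ 0 ∧
      ∀ a : lp (fun _ : ℕ => ℂ) 2, ν a = σ * ∑' n : ℕ, a n * z₀ ^ n := by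
  classical
  set c : ℕ → ℂ := fun n => ν (lp.single 2 n 1) with hc_def
  have hcB : ∀ n, ‖c n‖ ≤ ‖ν‖ := by
    intro n
    refine le_trans (ν.le_opNorm _) ?_
    have e := lp.norm_single (E := fun _ : ℕ => ℂ) (p := 2) (by norm_num) n (1:ℂ)
    rw [e]
    simp
  -- representation of ν through the coefficients c
  have nu_rep : ∀ a : lp (fun _ : ℕ => ℂ) 2, ν a = ∑' n : ℕ, a n * c n := by
    intro a
    have h1 : HasSum (fun n : ℕ => lp.single 2 n (a n)) a :=
      lp.hasSum_single (by norm_num) a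
    have h2 : HasSum (fun n : ℕ => ν (lp.single 2 n (a n))) (ν a) := h1.mapL ν
    rw [← h2.tsum_eq]
    refine tsum_congr fun n => ?_
    have e : lp.single 2 n (a n) = (a n) • lp.single (E := fun _ : ℕ => ℂ) 2 n (1:ℂ) := by
      rw [← lp.single_smul]
      congr 1
      simp
    rw [e, map_smul, smul_eq_mul]
  -- value of ν on elements built from summable coefficient sequences
  have nu_val : ∀ (f : ℕ → ℂ) (hf : Summable fun n => ‖f n‖),
      ν (lpOf hf) = ∑' n : ℕ, f n * c n := by
    intro f hf
    refine (nu_rep (lpOf hf)).trans (tsum_congr fun n => by rw [lpOf_apply])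
  -- summability of coefficient pairings
  have hprod : ∀ {A : PowerSeries ℂ}, (Summable fun n => ‖coeff n A‖) →
      Summable (fun n => coeff n A * c n) := by
    intro A hA
    apply Summable.of_norm
    refine Summable.of_nonneg_of_le (fun n => norm_nonneg _) (fun n => ?_) (hA.mul_right ‖ν‖)
    rw [norm_mul]
    exact mul_le_mul_of_nonneg_left (hcB n) (norm_nonneg _)
  have hsumX : Summable fun n => ‖coeff n (X : PowerSeries ℂ)‖ := by
    apply summable_of_ne_finset_zero (s := Finset.range 2)
    intro n hn
    rw [PowerSeries.coeff_X, if_neg (by simp only [Finset.mem_range] at hn; omega)]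
    simp
  -- value of ν on the exponential elements
  have hG_val : ∀ w : ℂ, ν (lpOf (summable_EW w)) = fseq c 0 w := by
    intro w
    rw [nu_val _ (summable_EW w), fseq]
    refine tsum_congr fun n => ?_
    rw [coeff_EW]
    have e0 : c (n + 0) = c n := rfl
    rw [e0]
    ring
  have hG_ne : ∀ w : ℂ, fseq c 0 w ≠ 0 := by
    intro w
    rw [← hG_val w]
    exact h _ (outerSeq_of_inv (EW w) (EW (-w)) (EW_mul_EW_neg w) _ (summable_EW (-w)))
  -- the inequality ‖f₁‖ ≤ ‖f₀‖ via the outer family (1 + t z) e^{w z}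
  have hfamily : ∀ (w t : ℂ), ‖t‖ < 1 → fseq c 0 w + t * fseq c 1 w ≠ 0 := by
    intro w t ht
    have hOP : Summable fun n => ‖coeff n (1 + PowerSeries.C t * X)‖ := by
      apply summable_of_ne_finset_zero (s := Finset.range 2)
      intro n hn
      simp only [Finset.mem_range] at hn
      rw [map_add, PowerSeries.coeff_one, if_neg (by omega), PowerSeries.coeff_C_mul,
        PowerSeries.coeff_X, if_neg (by omega)]
      simp
    have hsA : Summable fun n => ‖coeff n ((1 + PowerSeries.C t * X) * EW w)‖ :=
      summable_coeff_mul hOP (summable_EW w)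
    have hsD : Summable fun n => ‖coeff n (EW (-w) * GM t)‖ :=
      summable_coeff_mul (summable_EW (-w)) (summable_GM ht)
    have hADinv : (1 + PowerSeries.C t * X) * EW w * (EW (-w) * GM t) = 1 := by
      have e : (1 + PowerSeries.C t * X) * EW w * (EW (-w) * GM t)
          = ((1 + PowerSeries.C t * X) * GM t) * (EW w * EW (-w)) := by ring
      rw [e, OP_mul_GM, EW_mul_EW_neg, one_mul]
    have hne := h _ (outerSeq_of_inv _ _ hADinv hsA hsD)
    have hval : ν (lpOf hsA) = fseq c 0 w + t * fseq c 1 w := by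
      rw [nu_val _ hsA]
      have hA_eq : (1 + PowerSeries.C t * X) * EW w
          = EW w + PowerSeries.C t * (X * EW w) := by ring
      have hs1 : Summable fun n => coeff n (EW w) * c n := hprod (summable_EW w)
      have hs2 : Summable fun n => t * (coeff n (X * EW w) * c n) :=
        (hprod (summable_coeff_mul hsumX (summable_EW w))).mul_left t
      calc ∑' n : ℕ, coeff n ((1 + PowerSeries.C t * X) * EW w) * c n
          = ∑' n : ℕ, (coeff n (EW w) * c n + t * (coeff n (X * EW w) * c n)) :=
            tsum_congr fun n => by rw [hA_eq, map_add, PowerSeries.coeff_C_mul]; ring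
        _ = (∑' n : ℕ, coeff n (EW w) * c n)
            + ∑' n : ℕ, t * (coeff n (X * EW w) * c n) := Summable.tsum_add hs1 hs2
        _ = fseq c 0 w + t * fseq c 1 w := by
            congr 1
            · rw [fseq]
              refine tsum_congr fun n => ?_
              rw [coeff_EW]
              have e0 : c (n + 0) = c n := rfl
              rw [e0]
              ring
            · rw [tsum_mul_left]
              congr 1
              have hsupp : Function.support (fun n => coeff n (X * EW w) * c n)
                  ⊆ Set.range (fun j : ℕ => j + 1) := by
                intro n hn
                rcases Nat.eq_zero_or_pos n with rfl | hpos
                · rw [Function.mem_support, PowerSeries.coeff_zero_X_mul, zero_mul] at hn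
                  exact absurd rfl hn
                · exact ⟨n - 1, Nat.succ_pred_eq_of_pos hpos⟩
              have hre := Function.Injective.tsum_eq (g := fun j : ℕ => j + 1)
                (add_left_injective 1) (f := fun n => coeff n (X * EW w) * c n) hsupp
              rw [fseq, ← hre]
              refine tsum_congr fun j => ?_
              show coeff (j+1) (X * EW w) * c (j+1) = c (j + 1) * w ^ j / (j.factorial : ℂ)
              rw [PowerSeries.coeff_succ_X_mul, coeff_EW]
              ring
    rw [← hval]
    exact hne
  -- comparison of norms
  have hle : ∀ w : ℂ, ‖fseq c 1 w‖ ≤ ‖fseq c 0 w‖ := by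
    intro w
    by_contra hlt
    push_neg at hlt
    have hf1 : fseq c 1 w ≠ 0 := by
      intro h0
      rw [h0, norm_zero] at hlt
      exact absurd hlt (not_lt.mpr (norm_nonneg _))
    have ht : ‖-(fseq c 0 w / fseq c 1 w)‖ < 1 := by
      rw [norm_neg, norm_div, div_lt_one (norm_pos_iff.mpr hf1)]
      exact hlt
    have := hfamily w _ ht
    apply this
    rw [neg_mul, div_mul_cancel₀ _ hf1]
    ring
  -- Liouville
  have hdiff : ∀ k, Differentiable ℂ (fseq c k) := fun k w =>
    (fseq_hasDerivAt hcB k w).differentiableAt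
  have hr_diff : Differentiable ℂ (fun w => fseq c 1 w / fseq c 0 w) :=
    Differentiable.div (hdiff 1) (hdiff 0) hG_ne
  have hr_bdd : Bornology.IsBounded (Set.range fun w => fseq c 1 w / fseq c 0 w) := by
    refine (Metric.isBounded_closedBall (x := (0:ℂ)) (r := 1)).subset ?_
    rintro x ⟨w, rfl⟩
    rw [Metric.mem_closedBall, dist_zero_right, norm_div]
    rw [div_le_one (norm_pos_iff.mpr (hG_ne w))]
    exact hle w
  set β : ℂ := fseq c 1 0 / fseq c 0 0 with hβ_def
  have hrconst : ∀ w : ℂ, fseq c 1 w = β * fseq c 0 w := by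
    intro w
    have := hr_diff.apply_eq_apply_of_bounded hr_bdd w 0
    rw [div_eq_iff (hG_ne w)] at this
    exact this
  -- induction: fseq c k = β^k * fseq c 0
  have hfk : ∀ k : ℕ, ∀ w : ℂ, fseq c k w = β ^ k * fseq c 0 w := by
    intro k
    induction k with
    | zero => intro w; rw [pow_zero, one_mul]
    | succ k ih =>
      intro w
      have h1 : fseq c (k+1) w = deriv (fseq c k) w := ((fseq_hasDerivAt hcB k w).deriv).symm
      have h2 : fseq c k = fun x => β ^ k * fseq c 0 x := funext ih
      have h3 : HasDerivAt (fun x => β ^ k * fseq c 0 x) (β ^ k * fseq c 1 w) w :=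
        ((fseq_hasDerivAt hcB 0 w).const_mul (β ^ k))
      rw [h1, h2, h3.deriv, hrconst w]
      ring
  -- coefficients are geometric
  have hcgeom : ∀ k : ℕ, c k = β ^ k * c 0 := by
    intro k
    have := hfk k 0
    rw [fseq_zero, fseq_zero] at this
    exact this
  have hc0 : c 0 ≠ 0 := by
    have := hG_ne 0
    rw [fseq_zero] at this
    exact this
  -- |β| < 1 via the Riesz representation
  have hβlt : ‖β‖ < 1 := by
    by_contra hge
    push_neg at hge
    set v : lp (fun _ : ℕ => ℂ) 2 := (InnerProductSpace.toDual ℂ _).symm ν with hv_def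
    have hv : ∀ n : ℕ, c n = (starRingEnd ℂ) (v n) := by
      intro n
      have e1 : ν (lp.single 2 n (1:ℂ)) = inner ℂ v (lp.single 2 n (1:ℂ)) := by
        rw [hv_def]
        have := (InnerProductSpace.toDual ℂ (lp (fun _ : ℕ => ℂ) 2)).apply_symm_apply ν
        conv_lhs => rw [← this]
        rw [InnerProductSpace.toDual_apply_apply]
      rw [hc_def]
      simp only []
      rw [e1, lp.inner_single_right, RCLike.inner_apply, one_mul]
    have hsq : Summable fun n => ‖v n‖ ^ (2:ℕ) := by
      have h2 := (lp.memℓp v).summable (by norm_num : 0 < (2:ENNReal).toReal)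
      refine h2.congr fun n => ?_
      have e2 : (2:ENNReal).toReal = ((2:ℕ):ℝ) := by norm_num
      rw [e2, Real.rpow_natCast]
    have hten : Filter.Tendsto (fun n => ‖v n‖ ^ (2:ℕ)) Filter.atTop (nhds 0) :=
      hsq.tendsto_atTop_zero
    have hlb : ∀ n : ℕ, ‖c 0‖ ^ (2:ℕ) ≤ ‖v n‖ ^ (2:ℕ) := by
      intro n
      have e3 : ‖v n‖ = ‖c n‖ := by rw [hv n]; simp
      rw [e3, hcgeom n, norm_mul, norm_pow]
      have h1b : (1:ℝ) ≤ ‖β‖ ^ n := one_le_pow₀ hge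
      have : ‖c 0‖ ≤ ‖β‖ ^ n * ‖c 0‖ := le_mul_of_one_le_left (norm_nonneg _) h1b
      exact pow_le_pow_left₀ (norm_nonneg _) this 2
    have hpos : (0:ℝ) < ‖c 0‖ ^ (2:ℕ) := pow_pos (norm_pos_iff.mpr hc0) 2
    have := hten.eventually (gt_mem_nhds hpos)
    rcases this.exists with ⟨n, hn⟩
    exact absurd (hlb n) (not_le.mpr hn)
  -- conclusion
  refine ⟨β, mem_ball_zero_iff.mpr hβlt, c 0, hc0, fun a => ?_⟩
  rw [nu_rep a]
  rw [← tsum_mul_left]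
  refine tsum_congr fun n => ?_
  rw [hcgeom n]
  ring
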